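/- If positive integers s_i ≥ s_j and nonnegative reals w_i ≤ k·(s_i/k)^c, w_j ≤ k·(s_j/k)^c with c = log₂ 3 and k ≥ 1 (where for s ≤ k we may instead have the bound w ≤ s ≤ k·(s/k)^c), then 2w_j + w_i ≤ k·((s_i + s_j)/k)^c. -/

import Mathlib

open Real Set

lemma key13 (c : ℝ) (hc : 1 ≤ c) (h13 : ((1:ℝ)/2) ^ c = 1/3) (x y : ℝ)
    (hx : 0 ≤ x) (hxy : x ≤ y) : 2 * x ^ c + y ^ c ≤ (x + y) ^ c := by
  have hc0 : c ≠ 0 := by linarith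
  rcases eq_or_lt_of_le (hx.trans hxy) with hy | hy
  · have hx0 : x = 0 := le_antisymm (hxy.trans hy.symm.le) hx
    simp [← hy, hx0, Real.zero_rpow hc0]
  · set s := x + y with hs
    have hs0 : 0 < s := by positivity
    set t := x / s with ht
    have ht0 : 0 ≤ t := by positivity
    have ht2 : t ≤ 1/2 := by
      rw [div_le_iff₀ hs0]; simp only [hs]; linarith
    have hxt : x = t * s := by rw [ht, div_mul_cancel₀ x hs0.ne']
    have hyt : y = (1 - t) * s := by rw [sub_mul, one_mul, ← hxt]; linarith
    have hconv := convexOn_rpow hc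
    have hmem0 : (0:ℝ) ∈ Ici (0:ℝ) := mem_Ici.mpr le_rfl
    have hmemh : (1/2:ℝ) ∈ Ici (0:ℝ) := by norm_num
    have hmem1 : (1:ℝ) ∈ Ici (0:ℝ) := by norm_num
    have ha : (0:ℝ) ≤ 1 - 2*t := by linarith
    have hb : (0:ℝ) ≤ 2*t := by linarith
    have h1 := hconv.2 hmem0 hmemh ha hb (by ring)
    have h2 := hconv.2 hmemh hmem1 hb ha (by ring)
    simp only [smul_eq_mul] at h1 h2
    rw [show (1 - 2*t) * 0 + 2*t * (1/2:ℝ) = t by ring] at h1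
    rw [show 2*t * (1/2:ℝ) + (1 - 2*t) * 1 = 1 - t by ring] at h2
    rw [h13] at h1 h2
    rw [Real.zero_rpow hc0] at h1
    rw [Real.one_rpow] at h2
    have hkey : 2 * t ^ c + (1 - t) ^ c ≤ 1 := by nlinarith
    calc 2 * x ^ c + y ^ c = (2 * t ^ c + (1 - t) ^ c) * s ^ c := by
          rw [hxt, hyt, Real.mul_rpow ht0 hs0.le,
            Real.mul_rpow (by linarith) hs0.le]; ring
      _ ≤ 1 * s ^ c := by
          apply mul_le_mul_of_nonneg_right hkey (Real.rpow_nonneg hs0.le c)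
      _ = (x + y) ^ c := by rw [one_mul]

theorem stmt13 (k : ℝ) (hk : 1 ≤ k) (si sj : ℕ) (hsj : 1 ≤ sj) (hij : sj ≤ si)
    (wi wj : ℝ) (hwi0 : 0 ≤ wi) (hwj0 : 0 ≤ wj)
    (hwi : wi ≤ k * ((si : ℝ) / k) ^ Real.logb 2 3)
    (hwj : wj ≤ k * ((sj : ℝ) / k) ^ Real.logb 2 3) :
    2 * wj + wi ≤ k * (((si : ℝ) + sj) / k) ^ Real.logb 2 3 := by
  set c := Real.logb 2 3 with hcdef
  have hc : 1 ≤ c := by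
    rw [hcdef, Real.le_logb_iff_rpow_le (by norm_num) (by norm_num)]
    norm_num
  have h2c : (2:ℝ) ^ c = 3 := Real.rpow_logb (by norm_num) (by norm_num) (by norm_num)
  have h13 : ((1:ℝ)/2) ^ c = 1/3 := by
    rw [Real.div_rpow (by norm_num) (by norm_num), Real.one_rpow, h2c]
  have hk0 : (0:ℝ) < k := by linarith
  have hkey := key13 c hc h13 ((sj:ℝ)/k) ((si:ℝ)/k)
    (by positivity) ((div_le_div_iff_of_pos_right hk0).mpr (Nat.cast_le.mpr hij))
  have heq : (sj:ℝ)/k + (si:ℝ)/k = ((si:ℝ) + sj)/k := by ring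
  rw [heq] at hkey
  calc 2 * wj + wi ≤ 2 * (k * ((sj:ℝ)/k) ^ c) + k * ((si:ℝ)/k) ^ c := by linarith
    _ = k * (2 * ((sj:ℝ)/k) ^ c + ((si:ℝ)/k) ^ c) := by ring
    _ ≤ k * (((si:ℝ) + sj)/k) ^ c := by
        apply mul_le_mul_of_nonneg_left hkey hk0.le
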